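/- Let A be a reduced commutative ring and let f, g ∈ A[x] be monic polynomials. Suppose that for every prime ideal p of A, the image of g in κ(p)[x] divides the image of f in κ(p)[x], where κ(p) is the residue field of A at p. Then g divides f in A[x]. -/
import Mathlib


open Polynomial

/-- **Lemma (division over reduced rings).** If `A` is reduced, `f, g ∈ A[x]` are monic,
and for every prime `p` of `A` the image of `g` in `κ(p)[x]` divides the image of `f`,
then `g ∣ f` in `A[x]`. -/
theorem stmt0 {A : Type*} [CommRing A] [IsReduced A] (f g : Polynomial A)
    (hf : f.Monic) (hg : g.Monic)
    (h : ∀ (p : Ideal A) [p.IsPrime],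
      g.map ((algebraMap (A ⧸ p) (FractionRing (A ⧸ p))).comp (Ideal.Quotient.mk p)) ∣
        f.map ((algebraMap (A ⧸ p) (FractionRing (A ⧸ p))).comp (Ideal.Quotient.mk p))) :
    g ∣ f := by
  rw [← Polynomial.modByMonic_eq_zero_iff_dvd hg]
  -- Show every coefficient of the remainder is zero.
  ext n
  rw [coeff_zero]
  -- It suffices to show each coefficient lies in every prime ideal (nilradical = 0).
  have hnil : (f %ₘ g).coeff n ∈ nilradical A := by
    rw [nilradical_eq_sInf]
    refine Ideal.mem_sInf.2 ?_
    rintro p hp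
    haveI : p.IsPrime := hp
    set φ := (algebraMap (A ⧸ p) (FractionRing (A ⧸ p))).comp (Ideal.Quotient.mk p)
    have hmap : (f %ₘ g).map φ = 0 := by
      rw [Polynomial.map_modByMonic _ hg,
        Polynomial.modByMonic_eq_zero_iff_dvd (hg.map φ)]
      exact h p
    have : φ ((f %ₘ g).coeff n) = 0 := by
      have := congrArg (fun q => q.coeff n) hmap
      simpa using this
    -- kernel of φ is p
    have : (algebraMap (A ⧸ p) (FractionRing (A ⧸ p))) (Ideal.Quotient.mk p ((f %ₘ g).coeff n)) = 0 := this
    have h0 : Ideal.Quotient.mk p ((f %ₘ g).coeff n) = 0 :=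
      (IsFractionRing.injective (A ⧸ p) (FractionRing (A ⧸ p))) (by simpa using this)
    exact (Ideal.Quotient.eq_zero_iff_mem).1 h0
  simpa [nilradical_eq_zero] using hnil
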